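/- For every integer s ≥ 0 and every integer k ≥ 0, the k-th derivative at t = 0 of the function t ↦ 2/(1 + e^{-t})^{s+1} equals ∑_{j=1}^{s+1} (-1)^{k+j-1} γ_{s+1,j} E_{k+j-1}(0), where γ_{s+1,j} = (-1)^{j-1} c(s+1, j)/s! and c(·,·) denotes the unsigned Stirling numbers of the first kind. -/

import Mathlib

/-- Unsigned (signless) Stirling numbers of the first kind: `c(n,k)` is the number of
permutations of `n` elements with `k` cycles. -/
def stirling1 : ℕ → ℕ → ℕ
  | 0, 0 => 1
  | 0, _ + 1 => 0
  | _ + 1, 0 => 0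
  | n + 1, k + 1 => n * stirling1 n (k + 1) + stirling1 n k

/-- `E_m(0)`: the value of the `m`-th Euler polynomial at `0`. -/
noncomputable def eulerAtZero : ℕ → ℝ
  | 0 => 1
  | m + 1 => 2 * (1 - 2 ^ (m + 2)) * ((bernoulli (m + 2) : ℚ) : ℝ) / (m + 2)

open Finset


lemma diff_top_aux {f : ℝ → ℝ} (hf : ContDiff ℝ (⊤:ℕ∞) f) (i : ℕ) :
    Differentiable ℝ (iteratedDeriv i f) :=
  hf.differentiable_iteratedDeriv i (by
    exact_mod_cast WithTop.coe_lt_top i)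

lemma iteratedDeriv_mul' {f g : ℝ → ℝ} (hf : ContDiff ℝ (⊤:ℕ∞) f) (hg : ContDiff ℝ (⊤:ℕ∞) g) (n : ℕ) :
    iteratedDeriv n (fun t => f t * g t) = fun x =>
      ∑ i ∈ Finset.range (n + 1), (n.choose i : ℝ) *
        (iteratedDeriv i f x * iteratedDeriv (n - i) g x) := by
  have hdf := diff_top_aux hf
  have hdg := diff_top_aux hg
  induction n with
  | zero => simp
  | succ n ih =>
    rw [iteratedDeriv_succ, ih]
    funext x
    rw [deriv_fun_sum (A := fun i y => (n.choose i : ℝ) * (iteratedDeriv i f y * iteratedDeriv (n - i) g y)) (fun i _ => (((hdf i).mul (hdg (n - i))).const_mul (n.choose i : ℝ)).differentiableAt)]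
    have step : ∀ i ∈ Finset.range (n+1),
        deriv (fun x => (n.choose i : ℝ) * (iteratedDeriv i f x * iteratedDeriv (n - i) g x)) x
        = (n.choose i : ℝ) * (iteratedDeriv (i+1) f x * iteratedDeriv (n-i) g x)
          + (n.choose i : ℝ) * (iteratedDeriv i f x * iteratedDeriv ((n-i)+1) g x) := by
      intro i hi
      rw [deriv_const_mul (d := fun y => iteratedDeriv i f y * iteratedDeriv (n - i) g y) _ (((hdf i).mul (hdg (n - i))).differentiableAt),
        deriv_fun_mul ((hdf i).differentiableAt) ((hdg (n-i)).differentiableAt),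
        ← iteratedDeriv_succ, ← iteratedDeriv_succ]
      ring
    rw [Finset.sum_congr rfl step, Finset.sum_add_distrib]
    have h2 : ∀ i ∈ Finset.range (n+1), (n.choose i : ℝ) * (iteratedDeriv i f x * iteratedDeriv ((n-i)+1) g x)
        = (n.choose i : ℝ) * (iteratedDeriv i f x * iteratedDeriv (n+1-i) g x) := by
      intro i hi
      rw [Finset.mem_range] at hi
      have hni : n - i + 1 = n + 1 - i := by omega
      rw [hni]
    rw [Finset.sum_congr rfl h2]
    rw [Finset.sum_choose_succ_mul (fun a b => iteratedDeriv a f x * iteratedDeriv b g x) n]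
    ring


noncomputable def ff (s : ℕ) : ℝ → ℝ := fun t => 2 / (1 + Real.exp (-t)) ^ (s + 1)

lemma one_add_exp_pos (t : ℝ) : (0:ℝ) < 1 + Real.exp (-t) := by positivity

lemma contDiff_ff (s : ℕ) : ContDiff ℝ (⊤ : ℕ∞) (ff s) := by
  apply ContDiff.div contDiff_const
  · exact (contDiff_const.add (Real.contDiff_exp.comp contDiff_neg)).pow _
  · intro t
    have := one_add_exp_pos t
    positivity

lemma contDiff_nat {f : ℝ → ℝ} (hf : ContDiff ℝ (⊤:ℕ∞) f) (n : ℕ) : ContDiff ℝ n f :=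
  hf.of_le (by exact_mod_cast le_top)

lemma contDiff_deriv {f : ℝ → ℝ} (hf : ContDiff ℝ (⊤:ℕ∞) f) : ContDiff ℝ (⊤:ℕ∞) (deriv f) := by
  have := ContDiff.iterate_deriv 1 (f := f) hf
  simpa using this

lemma itd_smul (c : ℝ) {f : ℝ → ℝ} (hf : ContDiff ℝ (⊤:ℕ∞) f) (n : ℕ) (x : ℝ) :
    iteratedDeriv n (fun x => c * f x) x = c * iteratedDeriv n f x := by
  rw [← iteratedDerivWithin_univ, ← iteratedDerivWithin_univ]
  exact iteratedDerivWithin_const_mul (Set.mem_univ x) uniqueDiffOn_univ c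
    ((contDiff_nat hf n).contDiffWithinAt)

lemma itd_sub {f g : ℝ → ℝ} (hf : ContDiff ℝ (⊤:ℕ∞) f) (hg : ContDiff ℝ (⊤:ℕ∞) g) (n : ℕ) (x : ℝ) :
    iteratedDeriv n (fun x => f x - g x) x = iteratedDeriv n f x - iteratedDeriv n g x := by
  rw [← iteratedDerivWithin_univ, ← iteratedDerivWithin_univ, ← iteratedDerivWithin_univ]
  exact iteratedDerivWithin_sub (Set.mem_univ x) uniqueDiffOn_univ
    ((contDiff_nat hf n).contDiffWithinAt) ((contDiff_nat hg n).contDiffWithinAt)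

lemma itd_const (n : ℕ) : ∀ c : ℝ, iteratedDeriv n (fun _ : ℝ => c) = fun _ => if n = 0 then c else 0 := by
  induction n with
  | zero => simp
  | succ n ih =>
    intro c
    rw [iteratedDeriv_succ', deriv_const', ih 0]
    simp

lemma itd_const_sub {g : ℝ → ℝ} (c : ℝ) (hg : ContDiff ℝ (⊤:ℕ∞) g) (n : ℕ) (x : ℝ) :
    iteratedDeriv n (fun x => c - g x) x
      = (if n = 0 then c else 0) - iteratedDeriv n g x := by
  have : (fun x => c - g x) = fun x => (fun _ => c) x - g x := rfl
  rw [this, itd_sub contDiff_const hg n x, itd_const]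

lemma hasDerivAt_ff (s : ℕ) (t : ℝ) :
    HasDerivAt (ff s) (((s:ℝ)+1) * (ff s t - ff (s+1) t)) t := by
  have h1 : HasDerivAt (fun t : ℝ => 1 + Real.exp (-t)) (-Real.exp (-t)) t := by
    simpa using ((Real.hasDerivAt_exp (-t)).comp t (hasDerivAt_neg t)).const_add 1
  have h2 := h1.pow (s+1)
  have hu := one_add_exp_pos t
  have hne : (1 + Real.exp (-t)) ^ (s+1) ≠ 0 := by positivity
  have h3 := (hasDerivAt_const t (2:ℝ)).div h2 hne
  refine (h3 : HasDerivAt (ff s) _ t).congr_deriv ?_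
  simp only [ff, Pi.pow_apply, Nat.add_sub_cancel, Nat.cast_add, Nat.cast_one]
  have hs : ((s:ℝ)+1+1) = ((s:ℝ)+2) := by ring
  field_simp
  ring


open Finset

lemma contDiff_expneg : ContDiff ℝ (⊤:ℕ∞) (fun t : ℝ => Real.exp (-t)) :=
  Real.contDiff_exp.comp contDiff_neg

lemma itd_expneg (n : ℕ) (x : ℝ) :
    iteratedDeriv n (fun t : ℝ => Real.exp (-t)) x = (-1)^n * Real.exp (-x) := by
  have h := iteratedDeriv_exp_const_mul n (-1)
  have h2 : (fun s : ℝ => Real.exp (-1 * s)) = fun t : ℝ => Real.exp (-t) := by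
    funext s; rw [neg_one_mul]
  rw [h2] at h
  rw [h]
  ring_nf

lemma ff_zero_eq : ff 0 = fun t => 2 - Real.exp (-t) * ff 0 t := by
  funext t
  have hu := one_add_exp_pos t
  simp only [ff, pow_one]
  field_simp
  ring

lemma base (E : ℕ → ℝ)
    (hErec : ∀ k, 2 * E k + ∑ j ∈ range k, (k.choose j : ℝ) * E j
      = if k = 0 then 2 else 0) :
    ∀ k, iteratedDeriv k (ff 0) 0 = (-1)^k * E k := by
  intro k
  induction k using Nat.strong_induction_on with
  | _ k ih =>
  have key : iteratedDeriv k (ff 0) 0 = (if k = 0 then (2:ℝ) else 0) -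
      ∑ i ∈ range (k+1), (k.choose i : ℝ) *
        ((-1)^i * iteratedDeriv (k-i) (ff 0) 0) := by
    conv_lhs => rw [ff_zero_eq]
    rw [itd_const_sub 2 (contDiff_expneg.mul (contDiff_ff 0)) k 0,
      iteratedDeriv_mul' contDiff_expneg (contDiff_ff 0) k]
    congr 1
    refine Finset.sum_congr rfl fun i _ => ?_
    rw [itd_expneg]
    simp [Real.exp_zero]
  rw [Finset.sum_range_succ'] at key
  simp only [Nat.choose_zero_right, Nat.cast_one, pow_zero, one_mul, Nat.sub_zero] at key
  -- key : itd k = δ - (∑ i in range k, C(k,i+1) * ((-1)^(i+1) * itd (k-(i+1))) + itd k)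
  have hsum : ∑ i ∈ range k, (k.choose (i+1) : ℝ) *
      ((-1)^(i+1) * iteratedDeriv (k-(i+1)) (ff 0) 0)
      = (-1)^k * ∑ j ∈ range k, (k.choose j : ℝ) * E j := by
    have hterm : ∀ i ∈ range k, (k.choose (i+1) : ℝ) *
        ((-1)^(i+1) * iteratedDeriv (k-(i+1)) (ff 0) 0)
        = (-1)^k * ((k.choose (k - (k-1-i)) : ℝ) * E (k-1-i)) := by
      intro i hi
      rw [mem_range] at hi
      have h1 : k - (i+1) = k - 1 - i := by omega
      have h2 : k - (k - 1 - i) = i + 1 := by omega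
      rw [h1, h2, ih (k-1-i) (by omega)]
      have h3 : (-1:ℝ)^(i+1) * (-1)^(k-1-i) = (-1)^k := by
        rw [← pow_add]
        have : i + 1 + (k - 1 - i) = k := by omega
        rw [this]
      rw [show (-1:ℝ)^(i+1) * ((-1)^(k-1-i) * E (k-1-i))
        = ((-1:ℝ)^(i+1) * (-1)^(k-1-i)) * E (k-1-i) by ring, h3]
      ring
    rw [Finset.sum_congr rfl hterm, ← Finset.mul_sum]
    congr 1
    rw [Finset.sum_range_reflect (fun j => (k.choose (k-j) : ℝ) * E j) k]
    refine Finset.sum_congr rfl fun j hj => ?_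
    rw [mem_range] at hj
    rw [Nat.choose_symm (le_of_lt hj)]
  rw [hsum] at key
  have hk := hErec k
  by_cases hk0 : k = 0
  · subst hk0; simp at key hk ⊢; linarith
  · rw [if_neg hk0] at key hk
    have h2 : iteratedDeriv k (ff 0) 0
        = -((-1)^k * (∑ j ∈ range k, (k.choose j:ℝ) * E j))/2 := by linarith
    have hT : ∑ j ∈ range k, (k.choose j:ℝ) * E j = -2 * E k := by linarith
    rw [h2, hT]; ring
open Finset PowerSeries

lemma rescale_two_X : rescale (2:ℚ) X = 2 * X := by
  ext n
  rw [two_mul, map_add, coeff_rescale]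
  simp only [coeff_X]
  split_ifs with h
  · subst h; norm_num
  · simp

lemma exp_sub_one_ne_zero : (exp ℚ - 1) ≠ 0 := by
  intro h
  have := congrArg (coeff 1) h
  simp [coeff_exp] at this

lemma key_ps : rescale (2:ℚ) (bernoulliPowerSeries ℚ) * (exp ℚ + 1)
    = 2 * bernoulliPowerSeries ℚ := by
  have h1 : bernoulliPowerSeries ℚ * (exp ℚ - 1) = X :=
    bernoulliPowerSeries_mul_exp_sub_one ℚ
  have h2 := congrArg (rescale (2:ℚ)) h1
  rw [map_mul, map_sub, map_one, rescale_two_X] at h2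
  have h3 : rescale (2:ℚ) (exp ℚ) = exp ℚ ^ 2 := by
    rw [exp_pow_eq_rescale_exp]
    norm_num
  rw [h3] at h2
  apply mul_right_cancel₀ exp_sub_one_ne_zero
  calc rescale (2:ℚ) (bernoulliPowerSeries ℚ) * (exp ℚ + 1) * (exp ℚ - 1)
      = rescale (2:ℚ) (bernoulliPowerSeries ℚ) * (exp ℚ ^ 2 - 1) := by ring
    _ = 2 * X := h2
    _ = 2 * (bernoulliPowerSeries ℚ * (exp ℚ - 1)) := by rw [h1]
    _ = 2 * bernoulliPowerSeries ℚ * (exp ℚ - 1) := by ring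

lemma sum_choose_two_pow_bernoulli (n : ℕ) :
    ∑ i ∈ range (n+1), (n.choose i : ℚ) * 2^i * bernoulli i = (2 - 2^n) * bernoulli n := by
  have hc := congrArg (coeff n) key_ps
  rw [mul_add, map_add, mul_one] at hc
  rw [coeff_mul, Finset.Nat.sum_antidiagonal_eq_sum_range_succ_mk] at hc
  simp only [coeff_rescale, bernoulliPowerSeries, coeff_mk, coeff_exp,
    Algebra.algebraMap_self_apply, RingHom.id_apply] at hc
  rw [two_mul, map_add] at hc
  simp only [bernoulliPowerSeries, coeff_mk, Algebra.algebraMap_self_apply, RingHom.id_apply,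
    smul_eq_mul] at hc
  -- hc : ∑ i in range (n+1), 2^i * (bernoulli i / i!) * (1/(n-i)!) + 2^n * (bernoulli n / n!)
  --      = 2 * (bernoulli n / n!)
  have hfac : (n.factorial : ℚ) ≠ 0 := Nat.cast_ne_zero.mpr n.factorial_ne_zero
  have hmul := congrArg (fun x : ℚ => (n.factorial : ℚ) * x) hc
  simp only [mul_add, Finset.mul_sum] at hmul
  have hterm : ∀ i ∈ range (n+1),
      (n.factorial : ℚ) * (2^i * (bernoulli i / i.factorial) * (1/(n-i).factorial))
      = (n.choose i : ℚ) * 2^i * bernoulli i := by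
    intro i hi
    rw [mem_range, Nat.lt_succ_iff] at hi
    rw [Nat.cast_choose ℚ hi]
    have h1 : (i.factorial : ℚ) ≠ 0 := Nat.cast_ne_zero.mpr i.factorial_ne_zero
    have h2 : ((n-i).factorial : ℚ) ≠ 0 := Nat.cast_ne_zero.mpr (n-i).factorial_ne_zero
    field_simp
  rw [Finset.sum_congr rfl hterm] at hmul
  have h5 : (n.factorial : ℚ) * (bernoulli n / n.factorial) = bernoulli n := by
    field_simp
  rw [h5] at hmul
  have h6 : (n.factorial:ℚ) * (2^n * (bernoulli n / n.factorial)) = 2^n * bernoulli n := by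
    field_simp
  rw [h6] at hmul
  linarith

noncomputable def eulerQ : ℕ → ℚ := fun m => 2*(1-2^(m+1))*bernoulli (m+1)/((m:ℚ)+1)

lemma eulerQ_rec (k : ℕ) :
    2 * eulerQ k + ∑ j ∈ range k, (k.choose j : ℚ) * eulerQ j
      = if k = 0 then 2 else 0 := by
  by_cases hk : k = 0
  · subst hk; norm_num [eulerQ, bernoulli_one]
  rw [if_neg hk]
  have hterm : ∀ j ∈ range k, (k.choose j : ℚ) * eulerQ j
      = (2/((k:ℚ)+1)) * (((k+1).choose (j+1) : ℚ) * ((1 - 2^(j+1)) * bernoulli (j+1))) := by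
    intro j hj
    have hid : ((k:ℚ)+1) * (k.choose j : ℚ) = ((k+1).choose (j+1) : ℚ) * ((j:ℚ)+1) := by
      exact_mod_cast congrArg (Nat.cast : ℕ → ℚ) (Nat.add_one_mul_choose_eq k j)
    have hj1 : ((j:ℚ)+1) ≠ 0 := by positivity
    have hk1 : ((k:ℚ)+1) ≠ 0 := by positivity
    rw [eulerQ]
    field_simp
    linear_combination ((1-2^(j+1))*bernoulli (j+1)) * hid
  rw [Finset.sum_congr rfl hterm, ← Finset.mul_sum]
  have hshift : ∑ j ∈ range k, ((k+1).choose (j+1) : ℚ) * ((1 - 2^(j+1)) * bernoulli (j+1))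
      = ∑ i ∈ range (k+1), ((k+1).choose i : ℚ) * ((1 - 2^i) * bernoulli i) := by
    rw [Finset.sum_range_succ' (fun i => ((k+1).choose i : ℚ) * ((1 - 2^i) * bernoulli i)) k]
    norm_num
  have hsplit : ∑ i ∈ range (k+1), ((k+1).choose i : ℚ) * ((1 - 2^i) * bernoulli i)
      = (∑ i ∈ range (k+1), ((k+1).choose i : ℚ) * bernoulli i)
        - ∑ i ∈ range (k+1), ((k+1).choose i : ℚ) * 2^i * bernoulli i := by
    rw [← Finset.sum_sub_distrib]
    exact Finset.sum_congr rfl (fun i _ => by ring)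
  have hb1 : ∑ i ∈ range (k+1), ((k+1).choose i : ℚ) * bernoulli i = 0 := by
    rw [sum_bernoulli]
    simp [hk]
  have hb2 : ∑ i ∈ range (k+1), ((k+1).choose i : ℚ) * 2^i * bernoulli i
      = (2 - 2^(k+1)) * bernoulli (k+1) - 2^(k+1) * bernoulli (k+1) := by
    have h := sum_choose_two_pow_bernoulli (k+1)
    rw [Finset.sum_range_succ] at h
    simp only [Nat.choose_self, Nat.cast_one, one_mul] at h
    linarith
  rw [hshift, hsplit, hb1, hb2, eulerQ]
  have hk1 : ((k:ℚ)+1) ≠ 0 := by positivity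
  field_simp
  ring

lemma eulerAtZero_eq (m : ℕ) : eulerAtZero m = ((eulerQ m : ℚ) : ℝ) := by
  cases m with
  | zero => norm_num [eulerAtZero, eulerQ, bernoulli_one]
  | succ m =>
    show (2 * (1 - 2 ^ (m + 2)) * ((bernoulli (m + 2) : ℚ) : ℝ) / (m + 2) : ℝ) = _
    rw [eulerQ]
    push_cast
    ring

lemma euler_rec_real (k : ℕ) :
    2 * eulerAtZero k + ∑ j ∈ range k, (k.choose j : ℝ) * eulerAtZero j
      = if k = 0 then 2 else 0 := by
  have h := congrArg (Rat.cast : ℚ → ℝ) (eulerQ_rec k)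
  push_cast at h
  simp only [eulerAtZero_eq]
  rw [show ((if k = 0 then (2:ℝ) else 0)) = (((if k = 0 then (2:ℚ) else 0) : ℚ) : ℝ) by
    split <;> norm_num]
  exact_mod_cast eulerQ_rec k


lemma stirling1_eq_zero : ∀ n k, n < k → stirling1 n k = 0 := by
  intro n
  induction n with
  | zero => intro k hk; cases k with
    | zero => omega
    | succ k => rfl
  | succ n ih =>
    intro k hk
    cases k with
    | zero => omega
    | succ k =>
      show n * stirling1 n (k+1) + stirling1 n k = 0
      rw [ih (k+1) (by omega), ih k (by omega)]
      simp


noncomputable def RHSum (E : ℕ → ℝ) (s k : ℕ) : ℝ :=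
  ∑ i ∈ range (s+1), (-1:ℝ)^(k+i) *
    ((-1)^i * (stirling1 (s+1) (i+1) : ℝ) / (s.factorial : ℝ)) * E (k+i)

lemma RHS_rec (E : ℕ → ℝ) (s k : ℕ) :
    RHSum E (s+1) k = RHSum E s k - (1/((s:ℝ)+1)) * RHSum E s (k+1) := by
  have hfac : (s.factorial : ℝ) ≠ 0 := Nat.cast_ne_zero.mpr s.factorial_ne_zero
  have hs1 : ((s:ℝ)+1) ≠ 0 := by positivity
  have step1 : RHSum E (s+1) k
      = ∑ i ∈ range (s+2), ((-1:ℝ)^(k+i) *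
          ((-1)^i * (stirling1 (s+1) (i+1) : ℝ) / (s.factorial : ℝ)) * E (k+i)
        + (-1:ℝ)^(k+i) *
          ((-1)^i * (stirling1 (s+1) i : ℝ) / ((s.factorial : ℝ) * ((s:ℝ)+1))) * E (k+i)) := by
    rw [RHSum]
    refine Finset.sum_congr rfl fun i _ => ?_
    have hrec : stirling1 (s+2) (i+1) = (s+1) * stirling1 (s+1) (i+1) + stirling1 (s+1) i := rfl
    rw [hrec, Nat.factorial_succ]
    push_cast
    field_simp
  rw [step1, Finset.sum_add_distrib]
  have hA : ∑ i ∈ range (s+2), (-1:ℝ)^(k+i) *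
      ((-1)^i * (stirling1 (s+1) (i+1) : ℝ) / (s.factorial : ℝ)) * E (k+i)
      = RHSum E s k := by
    rw [Finset.sum_range_succ, stirling1_eq_zero (s+1) (s+2) (by omega)]
    simp [RHSum]
  have hB : ∑ i ∈ range (s+2), (-1:ℝ)^(k+i) *
      ((-1)^i * (stirling1 (s+1) i : ℝ) / ((s.factorial : ℝ) * ((s:ℝ)+1))) * E (k+i)
      = -(1/((s:ℝ)+1)) * RHSum E s (k+1) := by
    rw [Finset.sum_range_succ'
      (fun i => (-1:ℝ)^(k+i) *
        ((-1)^i * (stirling1 (s+1) i : ℝ) / ((s.factorial : ℝ) * ((s:ℝ)+1))) * E (k+i)) (s+1)]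
    have h0 : (stirling1 (s+1) 0 : ℝ) = 0 := by
      norm_cast
    have hB' : -(1/((s:ℝ)+1)) * RHSum E s (k+1)
        = ∑ i ∈ range (s+1), (-1:ℝ)^(k+(i+1)) *
            ((-1)^(i+1) * (stirling1 (s+1) (i+1) : ℝ) / ((s.factorial : ℝ) * ((s:ℝ)+1)))
            * E (k+(i+1)) := by
      rw [RHSum, Finset.mul_sum]
      refine Finset.sum_congr rfl fun i _ => ?_
      have hidx : k + (i+1) = (k+1) + i := by omega
      rw [hidx]
      push_cast
      field_simp
      ring
    rw [hB']
    simp [h0]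
  rw [hA, hB]
  ring


lemma main_lemma (s k : ℕ) : iteratedDeriv k (ff s) 0 = RHSum eulerAtZero s k := by
  induction s generalizing k with
  | zero =>
    rw [base eulerAtZero euler_rec_real k, RHSum]
    have h11 : stirling1 1 1 = 1 := rfl
    simp [h11]
  | succ s ih =>
    have hffs := contDiff_ff s
    have hd : ContDiff ℝ (⊤:ℕ∞) (deriv (ff s)) := contDiff_deriv hffs
    have hs1 : ((s:ℝ)+1) ≠ 0 := by positivity
    have heq : ff (s+1) = fun t => ff s t - (1/((s:ℝ)+1)) * deriv (ff s) t := by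
      funext t
      have hD := (hasDerivAt_ff s t).deriv
      rw [hD]
      field_simp
      ring
    rw [heq, itd_sub hffs (contDiff_const.mul hd) k 0,
      itd_smul (1/((s:ℝ)+1)) hd k 0, ← iteratedDeriv_succ', ih k, ih (k+1), RHS_rec]

/-- For all integers `s ≥ 0` and `k ≥ 0`, the `k`-th derivative at `t = 0`
of `t ↦ 2/(1 + e^{-t})^{s+1}` equals
`∑_{j=1}^{s+1} (-1)^{k+j-1} γ_{s+1,j} E_{k+j-1}(0)`, where
`γ_{s+1,j} = (-1)^{j-1} c(s+1,j)/s!`. -/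
theorem stmt10 (s k : ℕ) :
    iteratedDeriv k (fun t : ℝ => 2 / (1 + Real.exp (-t)) ^ (s + 1)) 0 =
      ∑ j ∈ Finset.Icc 1 (s + 1), (-1 : ℝ) ^ (k + j - 1) *
        ((-1 : ℝ) ^ (j - 1) * (stirling1 (s + 1) j : ℝ) / (Nat.factorial s : ℝ)) *
          eulerAtZero (k + j - 1) := by
  rw [show (fun t : ℝ => 2 / (1 + Real.exp (-t)) ^ (s + 1)) = ff s from rfl,
    main_lemma s k, RHSum]
  rw [show Finset.Icc 1 (s+1) = Finset.Ico 1 (s+2) from (Finset.Ico_add_one_right_eq_Icc 1 (s+1)).symm,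
    Finset.sum_Ico_eq_sum_range]
  have hn : s + 2 - 1 = s + 1 := by omega
  rw [hn]
  refine Finset.sum_congr rfl fun i _ => ?_
  have h1 : k + (1+i) - 1 = k + i := by omega
  have h2 : 1 + i - 1 = i := by omega
  have h3 : 1 + i = i + 1 := by omega
  rw [h1, h2, h3]
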